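/- Let α_n(b,b) = Σ 2^{dd(π)}, summed over permutations π of [n] whose descent word starts with a descent, ends with a descent, and has no double ascents, where dd(π) is the number of double descents. Then Σ_{n≥2} α_n(b,b) z^n/n! = e^{−z}/(1−z) − 1. -/

import Mathlib

open Finset
open scoped Classical

/-- π has an ascent at position i (0-indexed): π_i < π_{i+1}. -/
def Asc {n : ℕ} (π : Equiv.Perm (Fin n)) (i : ℕ) : Prop :=
  ∃ h : i + 1 < n, π ⟨i, Nat.lt_of_succ_lt h⟩ < π ⟨i + 1, h⟩

/-- π has a descent at position i (0-indexed): π_i > π_{i+1}. -/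
def Desc {n : ℕ} (π : Equiv.Perm (Fin n)) (i : ℕ) : Prop :=
  ∃ h : i + 1 < n, π ⟨i + 1, h⟩ < π ⟨i, Nat.lt_of_succ_lt h⟩

/-- The number of double descents of π: positions i with π_i > π_{i+1} > π_{i+2}. -/
noncomputable def dd {n : ℕ} (π : Equiv.Perm (Fin n)) : ℕ :=
  ((Finset.range n).filter (fun i => Desc π i ∧ Desc π (i + 1))).card

/-- π has no double ascents: no i with π_i < π_{i+1} < π_{i+2}. -/
def NoDoubleAsc {n : ℕ} (π : Equiv.Perm (Fin n)) : Prop :=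
  ∀ i : ℕ, ¬ (Asc π i ∧ Asc π (i + 1))

/-- α_n(b,b) = Σ 2^{dd(π)} over permutations of [n] with no double ascents whose
descent word starts and ends with a descent. -/
noncomputable def alphaBB (n : ℕ) : ℕ :=
  ∑ π ∈ Finset.univ.filter
      (fun π : Equiv.Perm (Fin n) => NoDoubleAsc π ∧ Desc π 0 ∧ Desc π (n - 2)),
    2 ^ dd π

namespace EGFaux

def bb (w : List Bool) : ℕ :=
  ∑ i ∈ Finset.range w.length,
    (if w.getD i false = true ∧ w.getD (i+1) false = true then 1 else 0)

def noaa (w : List Bool) : Prop :=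
  ∀ i, i + 1 < w.length → (w.getD i false = true ∨ w.getD (i+1) false = true)

lemma bb_cons (c : Bool) (w : List Bool) :
    bb (c :: w) = (if c = true ∧ w.getD 0 false = true then 1 else 0) + bb w := by
  unfold bb
  rw [List.length_cons, Finset.sum_range_succ', Nat.add_comm]
  simp [List.getD_cons_succ]

lemma noaa_nil : noaa [] := by intro i h; simp at h

lemma noaa_single (c : Bool) : noaa [c] := by intro i h; simp at h

lemma noaa_cons (c : Bool) (w : List Bool) :
    noaa (c :: w) ↔ ((w ≠ [] → (c = true ∨ w.getD 0 false = true)) ∧ noaa w) := by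
  constructor
  · intro h
    refine ⟨fun hw => ?_, fun i hi => ?_⟩
    · have := h 0 (by cases w with | nil => simp at hw | cons d t => simp)
      simpa using this
    · have := h (i+1) (by simpa using hi)
      simpa [List.getD_cons_succ] using this
  · rintro ⟨h0, h⟩ i hi
    cases i with
    | zero =>
      have hw : w ≠ [] := by
        intro he; rw [he] at hi; simp at hi
      simpa using h0 hw
    | succ j =>
      have := h j (by simpa using hi)
      simpa [List.getD_cons_succ] using this

lemma getD_nil (i : ℕ) : ([] : List Bool).getD i false = false := by
  simp

lemma bb_nil : bb [] = 0 := rfl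

lemma bb_single (c : Bool) : bb [c] = 0 := by
  rw [bb_cons, bb_nil, getD_nil]
  simp

lemma getD_last_cons (c : Bool) (w : List Bool) (hw : w ≠ []) :
    (c :: w).getD ((c :: w).length - 1) false = w.getD (w.length - 1) false := by
  have h : w.length - 1 + 1 = w.length := by
    cases w with | nil => simp at hw | cons d t => simp
  rw [List.length_cons]
  have : (c :: w).getD (w.length - 1 + 1) false = w.getD (w.length - 1) false :=
    List.getD_cons_succ ..
  rw [← this, h]
  simp

noncomputable def Tw (w : List Bool) : ℕ :=
  if w.getD 0 false = true ∧ w.getD (w.length - 1) false = true ∧ noaa w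
  then 2 ^ bb w else 0

noncomputable def T0w (w : List Bool) : ℕ :=
  if w = [] then 1 else
  if w.getD (w.length - 1) false = true ∧ noaa w then 2 ^ bb w else 0

noncomputable def T1w (w : List Bool) : ℕ :=
  if w = [] then 1 else
  if w.getD (w.length - 1) false = true ∧ noaa w then
    2 ^ (bb w + (if w.getD 0 false = true then 1 else 0)) else 0

lemma Tw_nil : Tw [] = 0 := by simp [Tw]

lemma Tw_cons (c : Bool) (w : List Bool) (hw : w ≠ []) :
    Tw (c :: w) =
      if (c = true ∧ w.getD (w.length - 1) false = true
          ∧ ((c = true ∨ w.getD 0 false = true) ∧ noaa w))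
      then 2 ^ ((if c = true ∧ w.getD 0 false = true then 1 else 0) + bb w) else 0 := by
  rw [Tw]
  refine if_congr ?_ ?_ rfl
  · rw [List.getD_cons_zero, getD_last_cons c w hw, noaa_cons]
    simp [hw]
  · rw [bb_cons]

lemma T0w_cons (c : Bool) (w : List Bool) (hw : w ≠ []) :
    T0w (c :: w) =
      if (w.getD (w.length - 1) false = true
          ∧ ((c = true ∨ w.getD 0 false = true) ∧ noaa w))
      then 2 ^ ((if c = true ∧ w.getD 0 false = true then 1 else 0) + bb w) else 0 := by
  rw [T0w, if_neg (by simp)]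
  refine if_congr ?_ ?_ rfl
  · rw [getD_last_cons c w hw, noaa_cons]
    simp [hw]
  · rw [bb_cons]

lemma T1w_cons (c : Bool) (w : List Bool) (hw : w ≠ []) :
    T1w (c :: w) =
      if (w.getD (w.length - 1) false = true
          ∧ ((c = true ∨ w.getD 0 false = true) ∧ noaa w))
      then 2 ^ ((if c = true ∧ w.getD 0 false = true then 1 else 0) + bb w
            + (if c = true then 1 else 0)) else 0 := by
  rw [T1w, if_neg (by simp)]
  refine if_congr ?_ ?_ rfl
  · rw [getD_last_cons c w hw, noaa_cons]
    simp [hw]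
  · rw [bb_cons]
    simp only [List.getD_cons_zero]

lemma WA (c : Bool) (w : List Bool) :
    Tw (c :: w) = if c = true then T1w w else 0 := by
  rcases eq_or_ne w [] with rfl | hw
  · rw [Tw]
    cases c
    · simp [T1w]
    · rw [if_pos ⟨by simp, by simp, noaa_single _⟩, bb_single]
      simp [T1w]
  · rw [Tw_cons c w hw, T1w, if_neg hw]
    generalize w.getD 0 false = p
    cases c <;> cases p <;>
        by_cases h2 : w[w.length - 1]?.getD false = true <;> by_cases h3 : noaa w <;>
      simp [h2, h3, pow_succ] <;> ring

lemma WB (c : Bool) (w : List Bool) :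
    T1w (c :: w) = Tw w + (if c = true then T1w w + T0w w else 0) := by
  rcases eq_or_ne w [] with rfl | hw
  · rw [T1w, if_neg (by simp), Tw_nil]
    cases c
    · rw [if_neg (by simp)]
      simp [T0w, T1w]
    · rw [if_pos ⟨by simp, noaa_single _⟩, bb_single]
      simp [T0w, T1w]
  · rw [T1w_cons c w hw, Tw, T1w, if_neg hw, T0w, if_neg hw]
    generalize w.getD 0 false = p
    cases c <;> cases p <;>
        by_cases h2 : w[w.length - 1]?.getD false = true <;> by_cases h3 : noaa w <;>
      simp [h2, h3, pow_succ] <;> ring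

lemma WC (c : Bool) (w : List Bool) :
    T0w (c :: w) = Tw w + (if c = true then T0w w else 0) := by
  rcases eq_or_ne w [] with rfl | hw
  · rw [T0w, if_neg (by simp), Tw_nil]
    cases c
    · rw [if_neg (by simp)]
      simp [T0w]
    · rw [if_pos ⟨by simp, noaa_single _⟩, bb_single]
      simp [T0w]
  · rw [T0w_cons c w hw, Tw, T0w, if_neg hw]
    generalize w.getD 0 false = p
    cases c <;> cases p <;>
        by_cases h2 : w[w.length - 1]?.getD false = true <;> by_cases h3 : noaa w <;>
      simp [h2, h3, pow_succ] <;> ring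


/-- the cut-sum over decompositions into strictly decreasing blocks,
weight `∏ (block size - 1)`. -/
noncomputable def V (l : List ℕ) : ℕ :=
  if l = [] then 1 else
  ∑ k ∈ (Finset.Icc 2 l.length).attach,
    (k.1 - 1) * (if (l.take k.1).Chain' (· > ·) then V (l.drop k.1) else 0)
termination_by l.length
decreasing_by
  have hk := k.2
  simp only [Finset.mem_Icc] at hk
  have : l.length ≠ 0 := by simpa using ‹l ≠ []›
  simp only [List.length_drop]
  omega

noncomputable def V0 (l : List ℕ) : ℕ :=
  ∑ k ∈ Finset.Icc 1 l.length,
    (if (l.take k).Chain' (· > ·) then V (l.drop k) else 0)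

noncomputable def V1 (l : List ℕ) : ℕ :=
  ∑ k ∈ Finset.Icc 1 l.length,
    k * (if (l.take k).Chain' (· > ·) then V (l.drop k) else 0)

lemma V_nil : V [] = 1 := by rw [V]; simp

lemma V_eq (l : List ℕ) (h : l ≠ []) :
    V l = ∑ k ∈ Finset.Icc 2 l.length,
      (k - 1) * (if (l.take k).Chain' (· > ·) then V (l.drop k) else 0) := by
  rw [V]
  rw [if_neg h]
  exact Finset.sum_attach _ (fun k => (k - 1) * (if (l.take k).Chain' (· > ·) then V (l.drop k) else 0))

lemma sum_shift (x y : ℕ) (t : List ℕ) (co : ℕ → ℕ) :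
    (∑ k ∈ Finset.Icc 2 (x :: y :: t).length,
      co k * (if ((x :: y :: t).take k).Chain' (· > ·) then V ((x :: y :: t).drop k) else 0))
    = if y < x then
        (∑ k ∈ Finset.Icc 1 ((y :: t).length),
          co (k+1) * (if ((y :: t).take k).Chain' (· > ·) then V ((y :: t).drop k) else 0))
      else 0 := by
  have hmap : Finset.Icc 2 (x :: y :: t).length
      = (Finset.Icc 1 ((y :: t).length)).map (addRightEmbedding 1) := by
    rw [Finset.map_add_right_Icc]
    simp
  rw [hmap, Finset.sum_map]
  simp only [addRightEmbedding_apply]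
  by_cases hxy : y < x
  · rw [if_pos hxy]
    refine Finset.sum_congr rfl fun k hk => ?_
    simp only [Finset.mem_Icc] at hk
    obtain ⟨j, rfl⟩ : ∃ j, k = j + 1 := ⟨k - 1, by omega⟩
    rw [List.take_succ_cons, List.drop_succ_cons, List.take_succ_cons]
    simp [List.Chain', List.isChain_cons_cons, hxy]
  · rw [if_neg hxy]
    refine Finset.sum_eq_zero fun k hk => ?_
    simp only [Finset.mem_Icc] at hk
    obtain ⟨j, rfl⟩ : ∃ j, k = j + 1 := ⟨k - 1, by omega⟩
    rw [List.take_succ_cons, List.take_succ_cons]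
    simp [List.Chain', List.isChain_cons_cons, hxy]

lemma V_single (x : ℕ) : V [x] = 0 := by
  rw [V_eq _ (by simp)]
  simp

lemma V0_nil : V0 [] = 0 := by simp [V0]

lemma V1_nil : V1 [] = 0 := by simp [V1]

lemma V0_single (x : ℕ) : V0 [x] = 1 := by
  simp [V0, V_nil, List.Chain']

lemma V1_single (x : ℕ) : V1 [x] = 1 := by
  simp [V1, V_nil, List.Chain']

lemma V_cons (x y : ℕ) (t : List ℕ) :
    V (x :: y :: t) = if y < x then V1 (y :: t) else 0 := by
  rw [V_eq _ (by simp), sum_shift]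
  by_cases hxy : y < x
  · rw [if_pos hxy, if_pos hxy, V1]
    refine Finset.sum_congr rfl fun k hk => ?_
    simp
  · simp [hxy]

lemma Icc_one_split (m : ℕ) : Finset.Icc 1 (m+1) = insert 1 (Finset.Icc 2 (m+1)) := by
  ext a
  simp only [Finset.mem_Icc, Finset.mem_insert]
  omega

lemma V1_cons (x y : ℕ) (t : List ℕ) :
    V1 (x :: y :: t) = V (y :: t) + (if y < x then V1 (y :: t) + V0 (y :: t) else 0) := by
  rw [V1]
  have hl : (x :: y :: t).length = (y :: t).length + 1 := by simp
  rw [hl, Icc_one_split, Finset.sum_insert (by simp)]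
  have h1 : (1 : ℕ) * (if ((x :: y :: t).take 1).Chain' (· > ·) then V ((x :: y :: t).drop 1) else 0)
      = V (y :: t) := by simp [List.Chain']
  rw [h1, ← hl, sum_shift]
  congr 1
  by_cases hxy : y < x
  · rw [if_pos hxy, if_pos hxy, V1, V0, ← Finset.sum_add_distrib]
    refine Finset.sum_congr rfl fun k hk => ?_
    ring
  · simp [hxy]

lemma V0_cons (x y : ℕ) (t : List ℕ) :
    V0 (x :: y :: t) = V (y :: t) + (if y < x then V0 (y :: t) else 0) := by
  rw [V0]
  have hl : (x :: y :: t).length = (y :: t).length + 1 := by simp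
  rw [hl, Icc_one_split, Finset.sum_insert (by simp)]
  have h1 : (if ((x :: y :: t).take 1).Chain' (· > ·) then V ((x :: y :: t).drop 1) else 0)
      = V (y :: t) := by simp [List.Chain']
  rw [h1, ← hl]
  have := sum_shift x y t (fun _ => 1)
  simp only [one_mul] at this
  rw [this]
  by_cases hxy : y < x
  · rw [if_pos hxy, if_pos hxy, V0]
  · simp [hxy]



def dword (l : List ℕ) : List Bool := List.zipWith (fun a b => decide (b < a)) l l.tail

lemma dword_nil : dword [] = [] := rfl

lemma dword_single (x : ℕ) : dword [x] = [] := rfl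

lemma dword_cons_cons (x y : ℕ) (t : List ℕ) :
    dword (x :: y :: t) = decide (y < x) :: dword (y :: t) := rfl

noncomputable def Tl (l : List ℕ) : ℕ := if l = [] then 1 else Tw (dword l)
noncomputable def T0l (l : List ℕ) : ℕ := if l = [] then 0 else T0w (dword l)
noncomputable def T1l (l : List ℕ) : ℕ := if l = [] then 0 else T1w (dword l)

theorem VT : ∀ l : List ℕ, V l = Tl l ∧ V0 l = T0l l ∧ V1 l = T1l l := by
  intro l
  induction l with
  | nil => exact ⟨by rw [V_nil]; rfl, by rw [V0_nil]; rfl, by rw [V1_nil]; rfl⟩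
  | cons x t IH =>
    cases t with
    | nil =>
      refine ⟨?_, ?_, ?_⟩
      · rw [V_single, Tl, if_neg (by simp), dword_single, Tw_nil]
      · rw [V0_single, T0l, if_neg (by simp), dword_single, T0w]
        simp
      · rw [V1_single, T1l, if_neg (by simp), dword_single, T1w]
        simp
    | cons y t' =>
      obtain ⟨h1, h2, h3⟩ := IH
      rw [Tl, if_neg (by simp)] at h1
      rw [T0l, if_neg (by simp)] at h2
      rw [T1l, if_neg (by simp)] at h3
      refine ⟨?_, ?_, ?_⟩
      · rw [Tl, if_neg (show ¬(x :: y :: t' = []) by simp), dword_cons_cons, WA,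
          V_cons, h3]
        by_cases hxy : y < x <;> simp [hxy]
      · rw [T0l, if_neg (show ¬(x :: y :: t' = []) by simp), dword_cons_cons, WC,
          V0_cons, h1, h2]
        by_cases hxy : y < x <;> simp [hxy]
      · rw [T1l, if_neg (show ¬(x :: y :: t' = []) by simp), dword_cons_cons, WB,
          V1_cons, h1, h2, h3]
        by_cases hxy : y < x <;> simp [hxy]

noncomputable def AA : ℕ → ℕ
  | 0 => 1
  | (n+1) => ∑ k ∈ (Finset.Icc 2 (n+1)).attach,
      (k.1 - 1) * ((n+1).choose k.1 * AA (n+1 - k.1))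
termination_by n => n
decreasing_by
  have hk := k.2
  simp only [Finset.mem_Icc] at hk
  omega

lemma AA_zero : AA 0 = 1 := by rw [AA]

lemma AA_succ (n : ℕ) : AA (n+1) =
    ∑ k ∈ Finset.Icc 2 (n+1), (k - 1) * ((n+1).choose k * AA (n+1 - k)) := by
  rw [AA]
  exact Finset.sum_attach _ (fun k => (k - 1) * ((n+1).choose k * AA (n+1 - k)))

noncomputable def sortDesc (K : Finset ℕ) : List ℕ := (K.sort (· ≤ ·)).reverse

noncomputable def permsOf (K : Finset ℕ) : Finset (List ℕ) :=
  (K.sort (· ≤ ·)).permutations.toFinset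

lemma mem_permsOf {K : Finset ℕ} {l : List ℕ} :
    l ∈ permsOf K ↔ l.Nodup ∧ l.toFinset = K := by
  rw [permsOf, List.mem_toFinset, List.mem_permutations]
  constructor
  · intro h
    refine ⟨h.nodup_iff.mpr (K.sort_nodup (· ≤ ·)), ?_⟩
    rw [List.toFinset_eq_of_perm _ _ h, Finset.sort_toFinset]
  · rintro ⟨h1, h2⟩
    refine List.perm_of_nodup_nodup_toFinset_eq h1 (K.sort_nodup (· ≤ ·)) ?_
    rw [h2, Finset.sort_toFinset]

lemma length_mem_permsOf {K : Finset ℕ} {l : List ℕ} (h : l ∈ permsOf K) :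
    l.length = K.card := by
  obtain ⟨h1, h2⟩ := mem_permsOf.mp h
  rw [← h2, List.toFinset_card_of_nodup h1]

instance : IsAntisymm ℕ (· > ·) :=
  ⟨fun a b h1 h2 => absurd h1 (not_lt.mpr (le_of_lt h2))⟩

lemma sortDesc_sorted (K : Finset ℕ) : (sortDesc K).Pairwise (· > ·) := by
  rw [sortDesc, List.pairwise_reverse]
  exact List.sortedLT_iff_pairwise.mp K.sortedLT_sort

lemma sortDesc_nodup (K : Finset ℕ) : (sortDesc K).Nodup := by
  rw [sortDesc]
  exact List.nodup_reverse.mpr (K.sort_nodup (· ≤ ·))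

lemma sortDesc_toFinset (K : Finset ℕ) : (sortDesc K).toFinset = K := by
  rw [sortDesc, List.toFinset_reverse, Finset.sort_toFinset]

lemma sortDesc_length (K : Finset ℕ) : (sortDesc K).length = K.card := by
  rw [sortDesc, List.length_reverse, Finset.length_sort]

lemma eq_sortDesc_of_chain {s : List ℕ} (hs : s.Chain' (· > ·)) :
    s = sortDesc s.toFinset := by
  have hsorted : s.Pairwise (· > ·) := List.isChain_iff_pairwise.mp hs
  have hnodup : s.Nodup := hsorted.imp (fun h => ne_of_gt h)
  refine List.Perm.eq_of_pairwise' hsorted (sortDesc_sorted _) ?_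
  exact List.perm_of_nodup_nodup_toFinset_eq hnodup (sortDesc_nodup _)
    (by rw [sortDesc_toFinset])

theorem sum_permsOf_V : ∀ (n : ℕ) (K : Finset ℕ), K.card = n →
    ∑ l ∈ permsOf K, V l = AA n := by
  intro n
  induction n using Nat.strong_induction_on with
  | _ n IH =>
    intro K hK
    rcases Nat.eq_zero_or_pos n with rfl | hn
    · rw [Finset.card_eq_zero] at hK
      subst hK
      rw [AA_zero]
      have : permsOf (∅ : Finset ℕ) = {[]} := by
        ext l
        rw [mem_permsOf, Finset.mem_singleton]
        constructor
        · rintro ⟨h1, h2⟩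
          exact (List.toFinset_eq_empty_iff l).mp h2
        · rintro rfl
          exact ⟨List.nodup_nil, rfl⟩
      rw [this, Finset.sum_singleton, V_nil]
    · -- n ≥ 1
      obtain ⟨m, rfl⟩ : ∃ m, n = m + 1 := ⟨n - 1, by omega⟩
      have step1 : ∀ l ∈ permsOf K, V l =
          ∑ k ∈ Finset.Icc 2 (m+1),
            (k - 1) * (if (l.take k).Chain' (· > ·) then V (l.drop k) else 0) := by
        intro l hl
        have hlen := length_mem_permsOf hl
        have hne : l ≠ [] := by
          intro h
          rw [h] at hlen
          simp [hK] at hlen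
        rw [V_eq l hne, hlen, hK]
      rw [Finset.sum_congr rfl step1, Finset.sum_comm]
      have step2 : ∀ k ∈ Finset.Icc 2 (m+1),
          (∑ l ∈ permsOf K,
            (k - 1) * (if (l.take k).Chain' (· > ·) then V (l.drop k) else 0))
          = (k - 1) * ((m+1).choose k * AA (m+1-k)) := by
        intro k hk
        simp only [Finset.mem_Icc] at hk
        rw [← Finset.mul_sum]
        congr 1
        -- key bijection
        have inner : ∑ l ∈ permsOf K,
            (if (l.take k).Chain' (· > ·) then V (l.drop k) else 0)
            = ∑ p ∈ (K.powersetCard k).sigma (fun K' => permsOf (K \ K')), V p.2 := by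
          rw [← Finset.sum_filter]
          refine Finset.sum_bij'
            (fun l _ => (⟨(l.take k).toFinset, l.drop k⟩ : Σ _ : Finset ℕ, List ℕ))
            (fun p _ => sortDesc p.1 ++ p.2) ?_ ?_ ?_ ?_ ?_
          · -- maps into sigma
            intro l hl
            rw [Finset.mem_filter] at hl
            obtain ⟨hl, hchain⟩ := hl
            obtain ⟨hnd, htf⟩ := mem_permsOf.mp hl
            have hlen : l.length = m + 1 := by rw [length_mem_permsOf hl, hK]
            have htake_nd : (l.take k).Nodup := hnd.sublist (List.take_sublist k l)
            have hdrop_nd : (l.drop k).Nodup := hnd.sublist (List.drop_sublist k l)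
            have htake_len : (l.take k).length = k := by
              rw [List.length_take, hlen]
              omega
            have hsplit : l.take k ++ l.drop k = l := List.take_append_drop k l
            have hdisj : Disjoint (l.take k).toFinset (l.drop k).toFinset := by
              rw [List.disjoint_toFinset_iff_disjoint]
              have := hnd
              rw [← hsplit, List.nodup_append] at this
              exact fun a ha hb => this.2.2 a ha a hb rfl
            have hunion : (l.take k).toFinset ∪ (l.drop k).toFinset = K := by
              rw [← List.toFinset_append, hsplit, htf]
            rw [Finset.mem_sigma]
            constructor
            · rw [Finset.mem_powersetCard]
              exact ⟨by rw [← hunion]; exact Finset.subset_union_left,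
                by rw [List.toFinset_card_of_nodup htake_nd, htake_len]⟩
            · rw [mem_permsOf]
              exact ⟨hdrop_nd, by rw [← hunion, Finset.union_sdiff_cancel_left hdisj]⟩
          · -- maps back into filter
            intro p hp
            rw [Finset.mem_sigma] at hp
            obtain ⟨hp1, hp2⟩ := hp
            rw [Finset.mem_powersetCard] at hp1
            obtain ⟨hsub, hcard⟩ := hp1
            obtain ⟨hnd2, htf2⟩ := mem_permsOf.mp hp2
            have hlen1 : (sortDesc p.1).length = k := by rw [sortDesc_length, hcard]
            rw [Finset.mem_filter]
            constructor
            · rw [mem_permsOf]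
              constructor
              · rw [List.nodup_append]
                refine ⟨sortDesc_nodup _, hnd2,
                  fun a ha b hb hab => (?_ : (sortDesc p.1).Disjoint p.2) ha (by rw [hab]; exact hb)⟩
                rw [← List.disjoint_toFinset_iff_disjoint, sortDesc_toFinset, htf2]
                exact Finset.disjoint_sdiff
              · rw [List.toFinset_append, sortDesc_toFinset, htf2]
                exact Finset.union_sdiff_of_subset hsub
            · rw [List.take_left' hlen1]
              exact List.isChain_iff_pairwise.mpr (sortDesc_sorted _)
          · -- left inverse
            intro l hl
            dsimp only
            rw [Finset.mem_filter] at hl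
            have hchain := hl.2
            rw [← eq_sortDesc_of_chain hchain]
            exact List.take_append_drop k l
          · -- right inverse
            intro p hp
            obtain ⟨K', l'⟩ := p
            dsimp only
            rw [Finset.mem_sigma] at hp
            obtain ⟨hp1, hp2⟩ := hp
            rw [Finset.mem_powersetCard] at hp1
            have hlen1 : (sortDesc K').length = k := by rw [sortDesc_length, hp1.2]
            rw [List.take_left' hlen1, List.drop_left' hlen1, sortDesc_toFinset]
          · -- values agree
            intro l hl
            rfl
        rw [inner, Finset.sum_sigma]
        have step3 : ∀ K' ∈ K.powersetCard k,
            ∑ l' ∈ permsOf (K \ K'), V l' = AA (m+1-k) := by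
          intro K' hK'
          rw [Finset.mem_powersetCard] at hK'
          refine IH (m+1-k) (by omega) _ ?_
          rw [Finset.card_sdiff_of_subset hK'.1, hK, hK'.2]
        rw [Finset.sum_congr rfl step3, Finset.sum_const, Finset.card_powersetCard, hK]
        simp [Nat.mul_comm]
      rw [Finset.sum_congr rfl step2, ← AA_succ]


section Transfer

variable {n : ℕ}

def lst (π : Equiv.Perm (Fin n)) : List ℕ := List.ofFn (fun i => (π i : ℕ))

lemma lst_length (π : Equiv.Perm (Fin n)) : (lst π).length = n := by simp [lst]

lemma lst_nodup (π : Equiv.Perm (Fin n)) : (lst π).Nodup := by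
  rw [lst, List.nodup_ofFn]
  intro i j hij
  exact π.injective (Fin.val_injective hij)

lemma lst_toFinset (π : Equiv.Perm (Fin n)) : (lst π).toFinset = Finset.range n := by
  apply Finset.eq_of_subset_of_card_le
  · intro x hx
    rw [List.mem_toFinset, lst, List.mem_ofFn] at hx
    obtain ⟨i, rfl⟩ := hx
    simp [Finset.mem_range, (π i).isLt]
  · rw [Finset.card_range, List.toFinset_card_of_nodup (lst_nodup π),
      lst_length]

lemma lst_getElem (π : Equiv.Perm (Fin n)) (i : ℕ) (h : i < (lst π).length) :
    (lst π)[i] = (π ⟨i, by rwa [lst_length] at h⟩ : ℕ) := by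
  simp [lst]

lemma dword_lst_length (π : Equiv.Perm (Fin n)) :
    (dword (lst π)).length = n - 1 := by
  rw [dword, List.length_zipWith, List.length_tail, lst_length]
  omega

lemma dword_lst_getD (π : Equiv.Perm (Fin n)) (i : ℕ) :
    ((dword (lst π)).getD i false = true) ↔ Desc π i := by
  by_cases h : i + 1 < n
  · have hi : i < (dword (lst π)).length := by rw [dword_lst_length]; omega
    rw [List.getD_eq_getElem _ _ hi]
    simp only [dword]
    rw [List.getElem_zipWith, List.getElem_tail, lst_getElem, lst_getElem]
    rw [decide_eq_true_eq]
    constructor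
    · intro hlt
      exact ⟨h, hlt⟩
    · rintro ⟨h', hlt⟩
      exact hlt
  · have hi : (dword (lst π)).length ≤ i := by rw [dword_lst_length]; omega
    rw [List.getD_eq_default _ _ hi]
    simp only [Bool.false_eq_true, false_iff]
    rintro ⟨h', -⟩
    exact h h'

lemma asc_iff (π : Equiv.Perm (Fin n)) (i : ℕ) :
    Asc π i ↔ (i + 1 < n ∧ ¬ Desc π i) := by
  constructor
  · rintro ⟨h, hlt⟩
    refine ⟨h, ?_⟩
    rintro ⟨h', hlt'⟩
    exact absurd hlt (not_lt.mpr (le_of_lt hlt'))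
  · rintro ⟨h, hd⟩
    refine ⟨h, ?_⟩
    rcases lt_trichotomy (π ⟨i, Nat.lt_of_succ_lt h⟩) (π ⟨i + 1, h⟩) with hc | hc | hc
    · exact hc
    · exfalso
      have : (⟨i, Nat.lt_of_succ_lt h⟩ : Fin n) = ⟨i + 1, h⟩ := π.injective hc
      simp [Fin.mk.injEq] at this
    · exact absurd ⟨h, hc⟩ hd

lemma noaa_iff (π : Equiv.Perm (Fin n)) :
    noaa (dword (lst π)) ↔ NoDoubleAsc π := by
  rw [noaa]
  constructor
  · intro h i hasc
    obtain ⟨h1, h2⟩ := hasc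
    obtain ⟨hi1, hnd1⟩ := (asc_iff π i).mp h1
    obtain ⟨hi2, hnd2⟩ := (asc_iff π (i+1)).mp h2
    have hlen : i + 1 < (dword (lst π)).length := by rw [dword_lst_length]; omega
    rcases h i hlen with hc | hc
    · exact hnd1 ((dword_lst_getD π i).mp hc)
    · exact hnd2 ((dword_lst_getD π (i+1)).mp hc)
  · intro h i hlen
    rw [dword_lst_length] at hlen
    by_contra hcon
    push_neg at hcon
    obtain ⟨hc1, hc2⟩ := hcon
    refine h i ⟨?_, ?_⟩
    · rw [asc_iff]
      refine ⟨by omega, ?_⟩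
      intro hd
      exact hc1 ((dword_lst_getD π i).mpr hd)
    · rw [asc_iff]
      refine ⟨by omega, ?_⟩
      intro hd
      exact hc2 ((dword_lst_getD π (i+1)).mpr hd)

lemma bb_eq_dd (π : Equiv.Perm (Fin n)) :
    bb (dword (lst π)) = dd π := by
  rw [dd, Finset.card_filter, bb, dword_lst_length]
  have h1 : (∑ i ∈ Finset.range (n-1),
      (if (dword (lst π)).getD i false = true ∧ (dword (lst π)).getD (i+1) false = true
       then 1 else 0))
      = ∑ i ∈ Finset.range n,
      (if (dword (lst π)).getD i false = true ∧ (dword (lst π)).getD (i+1) false = true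
       then 1 else 0) := by
    refine Finset.sum_subset (Finset.range_subset_range.mpr (by omega : n - 1 ≤ n)) ?_
    intro i hi hni
    rw [Finset.mem_range] at hi
    rw [Finset.mem_range] at hni
    have : (dword (lst π)).length ≤ i := by rw [dword_lst_length]; omega
    rw [List.getD_eq_default _ _ this]
    simp
  rw [h1]
  refine Finset.sum_congr rfl fun i _ => ?_
  congr 1
  rw [eq_iff_iff, dword_lst_getD, dword_lst_getD]

lemma value_eq (π : Equiv.Perm (Fin n)) (hn : 2 ≤ n) :
    (if NoDoubleAsc π ∧ Desc π 0 ∧ Desc π (n - 2) then 2 ^ dd π else 0)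
      = V (lst π) := by
  have hne : lst π ≠ [] := by
    intro h
    have := lst_length π
    rw [h] at this
    simp at this
    omega
  rw [(VT (lst π)).1, Tl, if_neg hne, Tw]
  refine (if_congr ?_ ?_ rfl).symm
  · rw [dword_lst_getD, dword_lst_getD, dword_lst_length, noaa_iff]
    constructor
    · rintro ⟨a, b, c⟩
      exact ⟨c, a, b⟩
    · rintro ⟨a, b, c⟩
      exact ⟨b, c, a⟩
  · rw [bb_eq_dd]

lemma alphaBB_eq_AA (hn : 2 ≤ n) : alphaBB n = AA n := by
  rw [← sum_permsOf_V n (Finset.range n) (Finset.card_range n)]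
  rw [alphaBB, Finset.sum_filter]
  refine Finset.sum_bij (fun π _ => lst π) ?_ ?_ ?_ ?_
  · intro π _
    rw [mem_permsOf]
    exact ⟨lst_nodup π, lst_toFinset π⟩
  · intro π1 _ π2 _ heq
    have heq' : lst π1 = lst π2 := heq
    rw [lst, lst, List.ofFn_inj] at heq'
    ext i
    exact congrFun heq' i
  · intro l hl
    obtain ⟨hnd, htf⟩ := mem_permsOf.mp hl
    have hlen : l.length = n := by
      rw [← List.toFinset_card_of_nodup hnd, htf, Finset.card_range]
    have hmem : ∀ i : Fin n, l[(i : ℕ)]'(by omega) < n := by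
      intro i
      have : l[(i : ℕ)]'(by omega) ∈ l.toFinset := by
        rw [List.mem_toFinset]
        exact List.getElem_mem _
      rw [htf, Finset.mem_range] at this
      exact this
    set f : Fin n → Fin n := fun i => ⟨l[(i : ℕ)]'(by omega), hmem i⟩ with hf
    have hinj : Function.Injective f := by
      intro a b hab
      rw [hf] at hab
      simp only [Fin.mk.injEq] at hab
      have := (List.Nodup.getElem_inj_iff hnd).mp hab
      exact Fin.val_injective this
    refine ⟨Equiv.ofBijective f (Finite.injective_iff_bijective.mp hinj), Finset.mem_univ _, ?_⟩
    apply List.ext_getElem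
    · rw [lst_length, hlen]
    · intro i h1 h2
      rw [lst_getElem]
      rfl
  · intro π _
    exact value_eq π hn

end Transfer


noncomputable def dseq (n : ℕ) : ℝ :=
  ∑ k ∈ Finset.range (n+1), (-1 : ℝ)^k / k.factorial

lemma telescope : ∀ m : ℕ,
    ∑ k ∈ Finset.Icc 2 m, ((k : ℝ) - 1) / k.factorial
      = 1 - 1 / m.factorial := by
  intro m
  induction m with
  | zero => simp
  | succ m IH =>
    rcases Nat.eq_zero_or_pos m with rfl | hm
    · norm_num
    · rw [Finset.sum_Icc_succ_top (by omega), IH]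
      have h1 : ((m+1).factorial : ℝ) = (m+1) * m.factorial := by
        rw [Nat.factorial_succ]
        push_cast
        ring
      have h2 : (m.factorial : ℝ) ≠ 0 := Nat.cast_ne_zero.mpr (Nat.factorial_ne_zero m)
      have h3 : ((m:ℝ) + 1) ≠ 0 := by positivity
      rw [h1]
      field_simp
      push_cast
      ring

lemma alt_binom (n : ℕ) (hn : 1 ≤ n) :
    ∑ j ∈ Finset.range (n+1), (-1 : ℝ)^j * (n.choose j : ℝ) = 0 := by
  have h := Int.alternating_sum_range_choose (n := n)
  rw [if_neg (by omega)] at h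
  have := congrArg (fun x : ℤ => (x : ℝ)) h
  push_cast at this
  simpa using this

lemma key (n : ℕ) (hn : 1 ≤ n) :
    ∑ k ∈ Finset.Icc 2 n,
        ((k : ℝ) - 1) * (n.choose k : ℝ) * (((n - k).factorial : ℝ) * dseq (n - k))
      = n.factorial * dseq n := by
  have hfac : ∀ j : ℕ, ((j.factorial : ℝ)) ≠ 0 :=
    fun j => Nat.cast_ne_zero.mpr (Nat.factorial_ne_zero j)
  -- rewrite terms via choose cast
  have step1 : ∀ k ∈ Finset.Icc 2 n,
      ((k : ℝ) - 1) * (n.choose k : ℝ) * (((n - k).factorial : ℝ) * dseq (n - k))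
        = ∑ j ∈ Finset.range (n - k + 1),
            (n.factorial : ℝ) * (((k : ℝ) - 1) / k.factorial * ((-1)^j / j.factorial)) := by
    intro k hk
    rw [Finset.mem_Icc] at hk
    have hcast : (n.choose k : ℝ) = n.factorial / (k.factorial * (n - k).factorial) :=
      Nat.cast_choose ℝ hk.2
    rw [hcast, dseq, Finset.mul_sum, Finset.mul_sum]
    refine Finset.sum_congr rfl fun j hj => ?_
    field_simp
  rw [Finset.sum_congr rfl step1]
  -- swap the order of summation
  have swap : ∑ k ∈ Finset.Icc 2 n, ∑ j ∈ Finset.range (n - k + 1),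
      (n.factorial : ℝ) * (((k : ℝ) - 1) / k.factorial * ((-1)^j / j.factorial))
      = ∑ j ∈ Finset.range (n+1), ∑ k ∈ Finset.Icc 2 (n - j),
      (n.factorial : ℝ) * (((k : ℝ) - 1) / k.factorial * ((-1)^j / j.factorial)) := by
    simp_rw [Finset.sum_sigma']
    refine Finset.sum_nbij' (fun p => ⟨p.2, p.1⟩) (fun p => ⟨p.2, p.1⟩) ?_ ?_ ?_ ?_ ?_
    · rintro ⟨k, j⟩ h
      simp only [Finset.mem_sigma, Finset.mem_Icc, Finset.mem_range] at h ⊢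
      omega
    · rintro ⟨j, k⟩ h
      simp only [Finset.mem_sigma, Finset.mem_Icc, Finset.mem_range] at h ⊢
      omega
    · rintro ⟨k, j⟩ _
      rfl
    · rintro ⟨j, k⟩ _
      rfl
    · rintro ⟨k, j⟩ _
      rfl
  rw [swap]
  have inner : ∀ j ∈ Finset.range (n+1),
      ∑ k ∈ Finset.Icc 2 (n - j),
        (n.factorial : ℝ) * (((k : ℝ) - 1) / k.factorial * ((-1)^j / j.factorial))
      = (n.factorial : ℝ) * ((-1)^j / j.factorial) * (1 - 1/((n-j).factorial : ℝ)) := by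
    intro j hj
    have : ∀ k : ℕ, (n.factorial : ℝ) * (((k : ℝ) - 1) / k.factorial * ((-1)^j / j.factorial))
        = (n.factorial : ℝ) * ((-1)^j / j.factorial) * (((k : ℝ) - 1) / k.factorial) := by
      intro k
      ring
    simp_rw [this]
    rw [← Finset.mul_sum, telescope]
  rw [Finset.sum_congr rfl inner]
  have expand : ∀ j ∈ Finset.range (n+1),
      (n.factorial : ℝ) * ((-1)^j / j.factorial) * (1 - 1/((n-j).factorial : ℝ))
      = (n.factorial : ℝ) * ((-1)^j / j.factorial)
        - ((-1)^j * (n.choose j : ℝ)) := by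
    intro j hj
    rw [Finset.mem_range] at hj
    have hcast : (n.choose j : ℝ) = n.factorial / (j.factorial * (n - j).factorial) :=
      Nat.cast_choose ℝ (by omega)
    rw [hcast]
    field_simp
  rw [Finset.sum_congr rfl expand, Finset.sum_sub_distrib, alt_binom n hn, sub_zero]
  rw [← Finset.mul_sum, dseq]

lemma AA_real : ∀ n : ℕ, (AA n : ℝ) = n.factorial * dseq n := by
  intro n
  induction n using Nat.strong_induction_on with
  | _ n IH =>
    rcases n with _ | m
    · rw [AA_zero]
      simp [dseq]
    · rw [AA_succ]
      push_cast
      have step : ∀ k ∈ Finset.Icc 2 (m+1),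
          (((k - 1 : ℕ) : ℝ)) * (((m+1).choose k : ℝ) * (AA (m+1-k) : ℝ))
          = ((k : ℝ) - 1) * ((m+1).choose k : ℝ)
              * (((m+1-k).factorial : ℝ) * dseq (m+1-k)) := by
        intro k hk
        rw [Finset.mem_Icc] at hk
        rw [IH (m+1-k) (by omega), Nat.cast_sub (by omega)]
        push_cast
        ring
      rw [Finset.sum_congr rfl step, key (m+1) (by omega)]


lemma dseq_abs_le (n : ℕ) : |dseq n| ≤ 4 := by
  have hfact : ∀ k : ℕ, (2:ℝ)^k ≤ 2 * k.factorial := by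
    intro k
    induction k with
    | zero => norm_num
    | succ k IH =>
      rcases Nat.eq_zero_or_pos k with rfl | hk
      · norm_num [Nat.factorial]
      · rw [pow_succ, Nat.factorial_succ]
        push_cast
        have h2 : (2:ℝ) ≤ (k:ℝ) + 1 := by
          have : (1:ℝ) ≤ (k:ℝ) := by exact_mod_cast hk
          linarith
        have h3 : (0:ℝ) < k.factorial := by exact_mod_cast Nat.factorial_pos k
        nlinarith [pow_pos (by norm_num : (0:ℝ) < 2) k]
  have h1 : |dseq n| ≤ ∑ k ∈ Finset.range (n+1), |(-1:ℝ)^k / k.factorial| :=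
    Finset.abs_sum_le_sum_abs _ _
  have h2 : ∀ k ∈ Finset.range (n+1), |(-1:ℝ)^k / k.factorial| ≤ 2 * (1/2:ℝ)^k := by
    intro k _
    rw [abs_div, abs_pow, abs_neg, abs_one, one_pow]
    rw [abs_of_nonneg (by positivity : (0:ℝ) ≤ (k.factorial : ℝ))]
    rw [div_pow, one_pow, mul_one_div, div_le_div_iff₀ (by positivity) (by positivity), one_mul]
    exact hfact k
  have h3 : ∑ k ∈ Finset.range (n+1), (2:ℝ) * (1/2)^k ≤ 4 := by
    rw [← Finset.mul_sum]
    have : ∑ k ∈ Finset.range (n+1), (1/2:ℝ)^k = ((1/2:ℝ)^(n+1) - 1)/((1/2) - 1) :=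
      geom_sum_eq (by norm_num) (n+1)
    rw [this]
    have hp : (0:ℝ) < (1/2:ℝ)^(n+1) := by positivity
    have hp2 : (1/2:ℝ)^(n+1) ≤ 1 := pow_le_one₀ (by norm_num) (by norm_num)
    rw [show ((1/2:ℝ) - 1) = -(1/2) by norm_num]
    rw [div_neg, sub_div]
    nlinarith
  calc |dseq n| ≤ ∑ k ∈ Finset.range (n+1), |(-1:ℝ)^k / k.factorial| := h1
    _ ≤ ∑ k ∈ Finset.range (n+1), 2 * (1/2:ℝ)^k := Finset.sum_le_sum h2
    _ ≤ 4 := h3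

lemma dseq_zero : dseq 0 = 1 := by simp [dseq]

lemma dseq_one : dseq 1 = 0 := by
  rw [dseq]
  rw [Finset.sum_range_succ, Finset.sum_range_one]
  norm_num

section Analytic

variable (z : ℝ) (hz : |z| < 1)

lemma summable_g (hz : |z| < 1) : Summable (fun n => dseq n * z^n) := by
  refine Summable.of_norm_bounded
    ((summable_geometric_of_lt_one (abs_nonneg z) hz).mul_left 4) ?_
  intro n
  rw [Real.norm_eq_abs, abs_mul, abs_pow]
  exact mul_le_mul_of_nonneg_right (dseq_abs_le n) (by positivity)

lemma tsum_g (hz : |z| < 1) :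
    ∑' n : ℕ, dseq n * z^n = Real.exp (-z) * (1 - z)⁻¹ := by
  have hs1 : Summable (fun n : ℕ => ‖(-z)^n / n.factorial‖) := by
    refine (Real.summable_pow_div_factorial |z|).congr fun n => ?_
    rw [Real.norm_eq_abs, abs_div, abs_pow, abs_neg]
    rw [abs_of_nonneg (by positivity : (0:ℝ) ≤ (n.factorial:ℝ))]
  have hs2 : Summable (fun n : ℕ => ‖z^n‖) := by
    refine (summable_geometric_of_lt_one (abs_nonneg z) hz).congr fun n => ?_
    rw [Real.norm_eq_abs, abs_pow]
  have hexp : ∑' n : ℕ, (-z)^n / n.factorial = Real.exp (-z) := by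
    rw [Real.exp_eq_exp_ℝ]
    exact (NormedSpace.expSeries_div_hasSum_exp (-z)).tsum_eq
  have hgeom : ∑' n : ℕ, z^n = (1 - z)⁻¹ :=
    tsum_geometric_of_norm_lt_one (by rwa [Real.norm_eq_abs])
  rw [← hexp, ← hgeom]
  rw [tsum_mul_tsum_eq_tsum_sum_antidiagonal_of_summable_norm hs1 hs2]
  refine tsum_congr fun n => ?_
  rw [Finset.Nat.sum_antidiagonal_eq_sum_range_succ_mk]
  rw [dseq, Finset.sum_mul]
  refine Finset.sum_congr rfl fun k hk => ?_
  rw [Finset.mem_range, Nat.lt_succ_iff] at hk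
  have hzz : z^k * z^(n-k) = z^n := by
    rw [← pow_add]
    congr 1
    omega
  dsimp only
  rw [neg_pow, ← hzz]
  ring

end Analytic

end EGFaux

/-- Σ_{n≥2} α_n(b,b) z^n/n! = e^{−z}/(1−z) − 1 for |z| < 1. -/
theorem egf_alphaBB (z : ℝ) (hz : |z| < 1) :
    ∑' n : ℕ, (alphaBB (n + 2) : ℝ) * z ^ (n + 2) / (n + 2).factorial
      = Real.exp (-z) / (1 - z) - 1 := by
  classical
  have hterm : ∀ n : ℕ, (alphaBB (n + 2) : ℝ) * z ^ (n + 2) / (n + 2).factorial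
      = EGFaux.dseq (n + 2) * z ^ (n + 2) := by
    intro n
    rw [EGFaux.alphaBB_eq_AA (show 2 ≤ n+2 by omega), EGFaux.AA_real]
    have : ((n+2).factorial : ℝ) ≠ 0 := Nat.cast_ne_zero.mpr (Nat.factorial_ne_zero _)
    field_simp
  have hg := EGFaux.summable_g z hz
  have hg1 : Summable (fun n => EGFaux.dseq (n+1) * z^(n+1)) :=
    (summable_nat_add_iff 1).mpr hg
  have hg2 : Summable (fun n => EGFaux.dseq (n+2) * z^(n+2)) := by
    have := (summable_nat_add_iff 1).mpr hg1
    exact this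
  have h0 : ∑' n : ℕ, EGFaux.dseq n * z^n
      = EGFaux.dseq 0 * z^0 + ∑' n : ℕ, EGFaux.dseq (n+1) * z^(n+1) := by
    exact Summable.tsum_eq_zero_add hg
  have h1 : ∑' n : ℕ, EGFaux.dseq (n+1) * z^(n+1)
      = EGFaux.dseq 1 * z^1 + ∑' n : ℕ, EGFaux.dseq (n+2) * z^(n+2) := by
    exact Summable.tsum_eq_zero_add hg1
  calc ∑' n : ℕ, (alphaBB (n + 2) : ℝ) * z ^ (n + 2) / (n + 2).factorial
      = ∑' n : ℕ, EGFaux.dseq (n+2) * z^(n+2) := tsum_congr hterm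
    _ = Real.exp (-z) / (1 - z) - 1 := by
        have := EGFaux.tsum_g z hz
        rw [h0, EGFaux.dseq_zero] at this
        rw [h1, EGFaux.dseq_one] at this
        rw [div_eq_mul_inv]
        rw [← this]
        ring
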